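/- Margin-separation equality: if w ∈ ℝ^d satisfies |wᵀx⁺_i − wᵀx⁻_j| ≥ 1 for all i ∈ {1,…,m} and j ∈ {1,…,n}, then the tight structural SVM surrogate for pAUC over [α,β] satisfies R̂^tight_{pAUC(α,β)}(w;S) = R̂^hinge_{pAUC(α,β)}(w;S) + η_{[0,α]}(w), where η_{[0,α]}(w) = (1/(m(j_β−j_α))) Σ_{i=1}^m Σ_{j=1}^{j_α} (−wᵀ(x⁺_i − x⁻_{(j)_w}))₊. -/

import Mathlib

/-- Dot product of vectors in ℝ^d. -/
noncomputable def dot {d : ℕ} (w x : Fin d → ℝ) : ℝ := ∑ l, w l * x l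

/-- The j-th largest (1-indexed) of the n negative scores wᵀx⁻_l. -/
noncomputable def kthScore {n d : ℕ} (w : Fin d → ℝ) (xn : Fin n → Fin d → ℝ) (j : ℕ) : ℝ :=
  (((Finset.univ : Finset (Fin n)).val.map fun l => dot w (xn l)).sort (· ≤ ·)).getD (n - j) 0

/-- The tight structural SVM surrogate R̂^tight_{pAUC(α,β)}(w;S) of Eqn. (27):
the maximum over matrices in the restricted set Π^w_{m,j_β} (parametrized by their
row thresholds r_i ∈ {0,…,j_β}, so that π_{i,(j)_w} = 1[j ≤ r_i]) of
(1/(m(j_β−j_α))) Σ_i [ −Σ_{j=1}^{j_α} π_{i,(j)_w} wᵀ(x⁺_i − x⁻_{(j)_w})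
                      + Σ_{j=j_α+1}^{j_β} π_{i,(j)_w} (1 − wᵀ(x⁺_i − x⁻_{(j)_w})) ]. -/
noncomputable def Rtight {d m n : ℕ} (xp : Fin m → Fin d → ℝ) (xn : Fin n → Fin d → ℝ)
    (ja jb : ℕ) (w : Fin d → ℝ) : ℝ :=
  ⨆ r : Fin m → Fin (jb + 1),
    (1 / ((m : ℝ) * ((jb : ℝ) - (ja : ℝ)))) * ∑ i,
      ((∑ j ∈ Finset.Icc 1 ja,
          (if j ≤ (r i : ℕ) then -(dot w (xp i) - kthScore w xn j) else 0)) +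
       (∑ j ∈ Finset.Icc (ja + 1) jb,
          (if j ≤ (r i : ℕ) then 1 - (dot w (xp i) - kthScore w xn j) else 0)))

/-- Margin-separation equality in Theorem 8 of the paper: if
|wᵀx⁺_i − wᵀx⁻_j| ≥ 1 for all i, j, then
R̂^tight_{pAUC(α,β)}(w;S) = R̂^hinge_{pAUC(α,β)}(w;S) + η_{[0,α]}(w). -/
lemma sortlen {n d : ℕ} (w : Fin d → ℝ) (xn : Fin n → Fin d → ℝ) :
    (((Finset.univ : Finset (Fin n)).val.map fun l => dot w (xn l)).sort (· ≤ ·)).length = n := by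
  rw [Multiset.length_sort, Multiset.card_map]
  simp

lemma kth_mem {n d : ℕ} (w : Fin d → ℝ) (xn : Fin n → Fin d → ℝ) {j : ℕ}
    (hj1 : 1 ≤ j) (hjn : j ≤ n) : ∃ l, kthScore w xn j = dot w (xn l) := by
  have hn : n - j < n := by omega
  have hlen := sortlen w xn
  unfold kthScore
  rw [List.getD_eq_getElem _ _ (by rw [hlen]; exact hn)]
  have hm : (((Finset.univ : Finset (Fin n)).val.map fun l => dot w (xn l)).sort (· ≤ ·))[n-j]'(by rw [hlen]; exact hn) ∈ ((Finset.univ : Finset (Fin n)).val.map fun l => dot w (xn l)).sort (· ≤ ·) := List.getElem_mem _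
  rw [Multiset.mem_sort, Multiset.mem_map] at hm
  obtain ⟨l, _, hl⟩ := hm
  exact ⟨l, hl.symm⟩

lemma kth_anti {n d : ℕ} (w : Fin d → ℝ) (xn : Fin n → Fin d → ℝ) {j j' : ℕ}
    (hj1 : 1 ≤ j) (hjj : j ≤ j') (hjn : j' ≤ n) : kthScore w xn j' ≤ kthScore w xn j := by
  have h1 : n - j < n := by omega
  have h2 : n - j' < n := by omega
  have hlen := sortlen w xn
  unfold kthScore
  rw [List.getD_eq_getElem _ _ (by rw [hlen]; exact h2),
      List.getD_eq_getElem _ _ (by rw [hlen]; exact h1)]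
  have hs := Multiset.pairwise_sort (((Finset.univ : Finset (Fin n)).val.map fun l => dot w (xn l))) (· ≤ ·)
  have := hs.rel_get_of_le (a := ⟨n - j', by rw [hlen]; exact h2⟩) (b := ⟨n - j, by rw [hlen]; exact h1⟩) (by simp [Fin.le_def]; omega)
  simpa using this

theorem stmt13_aux (d m n ja jb : ℕ) (hja : 0 < ja) (h1 : ja < jb) (h2 : jb ≤ n)
    (xp : Fin m → Fin d → ℝ) (xn : Fin n → Fin d → ℝ) (w : Fin d → ℝ)
    (hmargin : ∀ i j, 1 ≤ |dot w (xp i) - dot w (xn j)|) :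
    (⨆ r : Fin m → Fin (jb + 1),
    (1 / ((m : ℝ) * ((jb : ℝ) - (ja : ℝ)))) * ∑ i,
      ((∑ j ∈ Finset.Icc 1 ja,
          (if j ≤ (r i : ℕ) then -(dot w (xp i) - kthScore w xn j) else 0)) +
       (∑ j ∈ Finset.Icc (ja + 1) jb,
          (if j ≤ (r i : ℕ) then 1 - (dot w (xp i) - kthScore w xn j) else 0)))) =
      (1 / ((m : ℝ) * ((jb : ℝ) - (ja : ℝ)))) *
          ∑ i, ∑ j ∈ Finset.Icc (ja + 1) jb, max (1 - (dot w (xp i) - kthScore w xn j)) 0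
      + (1 / ((m : ℝ) * ((jb : ℝ) - (ja : ℝ)))) *
          ∑ i, ∑ j ∈ Finset.Icc 1 ja, max (-(dot w (xp i) - kthScore w xn j)) 0 := by
  set C : ℝ := 1 / ((m : ℝ) * ((jb : ℝ) - (ja : ℝ))) with hC
  set s : Fin m → ℝ := fun i => dot w (xp i) with hs
  set t : ℕ → ℝ := fun j => kthScore w xn j with ht
  have hCnn : 0 ≤ C := by
    apply one_div_nonneg.mpr
    apply mul_nonneg (Nat.cast_nonneg m)
    have : (ja : ℝ) < jb := by exact_mod_cast h1
    linarith
  -- margin fact for j in range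
  have hmarg : ∀ (i : Fin m) (j : ℕ), 1 ≤ j → j ≤ jb →
      1 ≤ s i - t j ∨ 1 ≤ t j - s i := by
    intro i j hj1 hjb
    obtain ⟨l, hl⟩ := kth_mem w xn hj1 (le_trans hjb h2)
    have := hmargin i l
    rw [← hl] at this
    rcases abs_cases (s i - t j) with ⟨he, _⟩ | ⟨he, _⟩
    · left; rw [← he]; exact this
    · right; rw [show t j - s i = -(s i - t j) by ring, ← he]; exact this
  -- optimal threshold
  set k : Fin m → ℕ := fun i => ((Finset.Icc 1 jb).filter (fun j => s i < t j)).card with hk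
  have hkle : ∀ i, k i ≤ jb := by
    intro i
    calc ((Finset.Icc 1 jb).filter (fun j => s i < t j)).card
        ≤ (Finset.Icc 1 jb).card := Finset.card_filter_le _ _
      _ = jb := by rw [Nat.card_Icc]; omega
  have key : ∀ (i : Fin m) (j : ℕ), 1 ≤ j → j ≤ jb → (j ≤ k i ↔ s i < t j) := by
    intro i j hj1 hjb
    constructor
    · intro hjk
      by_contra hnot
      push_neg at hnot
      have hsub : (Finset.Icc 1 jb).filter (fun j => s i < t j) ⊆ Finset.Icc 1 (j - 1) := by
        intro j' hj'
        simp only [Finset.mem_filter, Finset.mem_Icc] at hj' ⊢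
        obtain ⟨⟨hj'1, hj'b⟩, hlt⟩ := hj'
        by_contra hc
        push_neg at hc
        have hjj' : j ≤ j' := by omega
        have := kth_anti w xn hj1 hjj' (le_trans hj'b h2)
        have : t j' ≤ s i := le_trans this hnot
        linarith
      have := Finset.card_le_card hsub
      rw [Nat.card_Icc] at this
      simp only [hk] at hjk
      omega
    · intro hlt
      have hsub : Finset.Icc 1 j ⊆ (Finset.Icc 1 jb).filter (fun j => s i < t j) := by
        intro j' hj'
        simp only [Finset.mem_Icc] at hj'
        simp only [Finset.mem_filter, Finset.mem_Icc]
        refine ⟨⟨hj'.1, le_trans hj'.2 hjb⟩, ?_⟩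
        have := kth_anti w xn hj'.1 hj'.2 (le_trans hjb h2)
        exact lt_of_lt_of_le hlt this
      have := Finset.card_le_card hsub
      rw [Nat.card_Icc] at this
      simp only [hk]
      omega
  -- the per-i function and its max
  set g : Fin m → ℕ → ℝ := fun i r =>
      (∑ j ∈ Finset.Icc 1 ja, (if j ≤ r then -(s i - t j) else 0)) +
      (∑ j ∈ Finset.Icc (ja + 1) jb, (if j ≤ r then 1 - (s i - t j) else 0)) with hg
  set M : Fin m → ℝ := fun i =>
      (∑ j ∈ Finset.Icc 1 ja, max (-(s i - t j)) 0) +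
      (∑ j ∈ Finset.Icc (ja + 1) jb, max (1 - (s i - t j)) 0) with hM
  have hub : ∀ (i : Fin m) (r : ℕ), g i r ≤ M i := by
    intro i r
    apply add_le_add
    · apply Finset.sum_le_sum
      intro j _
      split_ifs
      · exact le_max_left _ _
      · exact le_max_right _ _
    · apply Finset.sum_le_sum
      intro j _
      split_ifs
      · exact le_max_left _ _
      · exact le_max_right _ _
  have heq : ∀ i : Fin m, g i (k i) = M i := by
    intro i
    simp only [hg, hM]
    apply congrArg₂ (· + ·)
    · apply Finset.sum_congr rfl
      intro j hj
      simp only [Finset.mem_Icc] at hj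
      have hjb : j ≤ jb := by omega
      have hkey := key i j hj.1 hjb
      rcases hmarg i j hj.1 hjb with hm1 | hm2
      · have : ¬ (j ≤ k i) := by rw [hkey]; intro h; linarith
        rw [if_neg this, eq_comm, max_eq_right]; linarith
      · have : j ≤ k i := by rw [hkey]; linarith
        rw [if_pos this, eq_comm, max_eq_left]; linarith
    · apply Finset.sum_congr rfl
      intro j hj
      simp only [Finset.mem_Icc] at hj
      have hj1 : 1 ≤ j := by omega
      have hkey := key i j hj1 hj.2
      rcases hmarg i j hj1 hj.2 with hm1 | hm2
      · have : ¬ (j ≤ k i) := by rw [hkey]; intro h; linarith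
        rw [if_neg this, eq_comm, max_eq_right]; linarith
      · have : j ≤ k i := by rw [hkey]; linarith
        rw [if_pos this, eq_comm, max_eq_left]; linarith
  -- the sup
  have hbdd : BddAbove (Set.range (fun r : Fin m → Fin (jb + 1) =>
      C * ∑ i, g i (r i))) := (Set.finite_range _).bddAbove
  have hmain : (⨆ r : Fin m → Fin (jb + 1), C * ∑ i, g i (r i)) = C * ∑ i, M i := by
    apply le_antisymm
    · apply ciSup_le
      intro r
      apply mul_le_mul_of_nonneg_left _ hCnn
      exact Finset.sum_le_sum fun i _ => hub i (r i)
    · have := le_ciSup hbdd (fun i => (⟨k i, by have := hkle i; omega⟩ : Fin (jb + 1)))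
      calc C * ∑ i, M i = C * ∑ i, g i (k i) := by
            congr 1; exact Finset.sum_congr rfl fun i _ => (heq i).symm
        _ ≤ _ := this
  rw [show (⨆ r : Fin m → Fin (jb + 1),
    C * ∑ i, ((∑ j ∈ Finset.Icc 1 ja,
          (if j ≤ (r i : ℕ) then -(dot w (xp i) - kthScore w xn j) else 0)) +
       (∑ j ∈ Finset.Icc (ja + 1) jb,
          (if j ≤ (r i : ℕ) then 1 - (dot w (xp i) - kthScore w xn j) else 0)))) =
      (⨆ r : Fin m → Fin (jb + 1), C * ∑ i, g i (r i)) from rfl, hmain, hM]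
  rw [Finset.sum_add_distrib, mul_add]
  ring


theorem stmt13 (d m n ja jb : ℕ) (hja : 0 < ja) (h1 : ja < jb) (h2 : jb ≤ n)
    (xp : Fin m → Fin d → ℝ) (xn : Fin n → Fin d → ℝ) (w : Fin d → ℝ)
    (hmargin : ∀ i j, 1 ≤ |dot w (xp i) - dot w (xn j)|) :
    Rtight xp xn ja jb w =
      (1 / ((m : ℝ) * ((jb : ℝ) - (ja : ℝ)))) *
          ∑ i, ∑ j ∈ Finset.Icc (ja + 1) jb, max (1 - (dot w (xp i) - kthScore w xn j)) 0
      + (1 / ((m : ℝ) * ((jb : ℝ) - (ja : ℝ)))) *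
          ∑ i, ∑ j ∈ Finset.Icc 1 ja, max (-(dot w (xp i) - kthScore w xn j)) 0 := by
  unfold Rtight
  exact stmt13_aux d m n ja jb hja h1 h2 xp xn w hmargin
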